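/- arXiv:2306.03435 — 3 statements merged into one kernel-verified Lean document; each statement's English description precedes it below -/
import Mathlib

section
/- Under the discrete contextual dataset model (z_t ≡ 0) in which (δ^q, δ^w) equals (0,0) or (Δ,−Δ) each with probability 1/2, with Δ > √(ζ/(1−ζ)), for every choice of parameters w, q ∈ ℝ^d, the linear-attention model achieves at most 75% accuracy: P(y·f^lin-att(w,q)(X) ≤ 0) ≥ 1/4. -/
open MeasureTheory ProbabilityTheory Finset Filter

noncomputable section

/-- `d`-dimensional Euclidean space. -/
abbrev E (d : ℕ) : Type := EuclideanSpace ℝ (Fin d)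

/-- Real inner product. -/
def ip {d : ℕ} (x y : E d) : ℝ := inner ℝ x y

/-- Softmax over `Fin T`. -/
def softmax {T : ℕ} (v : Fin T → ℝ) : Fin T → ℝ :=
  fun t => Real.exp (v t) / ∑ s, Real.exp (v s)

/-- Prompt-attention model `f^att_{(w,q)}(X) = wᵀ Xᵀ φ(X q)`. -/
def promptAtt {T d : ℕ} (w q : E d) (X : Fin T → E d) : ℝ :=
  ∑ t, softmax (fun s => ip (X s) q) t * ip (X t) w

/-- Tokens of the contextual data model: `x_t = q★ + y•w★` on the relevance set `R`,
and `x_t = -δq•q★ - δw·y•w★ + z_t` off it. -/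
def tokens {T d : ℕ} (R : Finset (Fin T)) (qs ws : E d) (y δq δw : ℝ)
    (z : Fin T → E d) : Fin T → E d :=
  fun t => if t ∈ R then qs + y • ws else -(δq • qs) - (δw * y) • ws + z t

/-- Projection of `x` orthogonally to `a`:  `(I - āāᵀ) x`. -/
def projPerp {d : ℕ} (a x : E d) : E d := x - (ip a x / ‖a‖ ^ 2) • a


/-- Linear-attention model `f^lin-att(w,q)(X) = wᵀ Xᵀ X q / T`. -/
def linAtt {T d : ℕ} (w q : E d) (X : Fin T → E d) : ℝ :=
  (1 / (T : ℝ)) * ∑ t, ip (X t) w * ip (X t) q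

/-- Theorem 1, part 3: failure of linear attention on the discrete
contextual data model with `(δ^q,δ^w) ∈ {(0,0),(Δ,-Δ)}` equally likely,
`Δ > √(ζ/(1-ζ))`.  The misclassification probability, i.e. the average over the four
equally likely atoms `y ∈ {-1,1}`, `δ ∈ {0,Δ}` of the indicator of `y·f ≤ 0`, is at
least `1/4`; equivalently, accuracy is at most 75%. -/
theorem linear_attention_failure
    {T d : ℕ} (hT : 0 < T) (ζ : ℝ) (hζ0 : 0 < ζ) (hζ1 : ζ < 1)
    (qs ws : E d) (Δ : ℝ) (hΔ : Real.sqrt (ζ / (1 - ζ)) < Δ)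
    (R : Finset (Fin T)) (hR : (R.card : ℝ) = ζ * T)
    (w q : E d) :
    (1 : ℝ) / 4 ≤
      (∑ y ∈ ({-1, 1} : Finset ℝ), ∑ δ ∈ ({0, Δ} : Finset ℝ),
          if y * linAtt w q (tokens R qs ws y δ (-δ) fun _ => 0) ≤ 0 then (1 : ℝ) else 0)
        / 4 := by
  have h1ζ : 0 < 1 - ζ := by linarith
  have hΔ0 : 0 < Δ := lt_of_le_of_lt (Real.sqrt_nonneg _) hΔ
  have hΔ2 : ζ < (1 - ζ) * Δ ^ 2 := by
    have hs := Real.sq_sqrt (le_of_lt (div_pos hζ0 h1ζ))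
    have h2 : ζ / (1 - ζ) < Δ ^ 2 := by
      nlinarith [Real.sqrt_nonneg (ζ / (1 - ζ))]
    calc ζ = (1 - ζ) * (ζ / (1 - ζ)) := by field_simp
    _ < (1 - ζ) * Δ ^ 2 := by nlinarith
  have hval : ∀ y δ : ℝ, linAtt w q (tokens R qs ws y δ (-δ) fun _ => 0) =
      ζ * ((ip qs w + y * ip ws w) * (ip qs q + y * ip ws q)) +
      (1-ζ) * ((δ * (-ip qs w + y * ip ws w)) * (δ * (-ip qs q + y * ip ws q))) := by
    intro y δ
    have hfun : ∀ (v : E d), ∀ t, ip (tokens R qs ws y δ (-δ) (fun _ => 0) t) v =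
        if t ∈ R then ip qs v + y * ip ws v else δ * (-ip qs v + y * ip ws v) := by
      intro v t
      simp only [tokens, ip]
      split
      · rw [inner_add_left, real_inner_smul_left]
      · rw [add_zero, inner_sub_left, inner_neg_left, real_inner_smul_left,
          real_inner_smul_left]
        ring
    have hsum : ∑ t, ip (tokens R qs ws y δ (-δ) (fun _ => 0) t) w *
        ip (tokens R qs ws y δ (-δ) (fun _ => 0) t) q =
        ∑ t : Fin T, (if t ∈ R then (ip qs w + y * ip ws w) * (ip qs q + y * ip ws q)
          else (δ * (-ip qs w + y * ip ws w)) * (δ * (-ip qs q + y * ip ws q))) :=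
      Finset.sum_congr rfl fun t _ => by
        rw [hfun w t, hfun q t]; by_cases h : t ∈ R <;> simp [h]
    have hcard : R.card ≤ T := by simpa using Finset.card_le_card (Finset.subset_univ R)
    have hT0 : (T : ℝ) ≠ 0 := by positivity
    unfold linAtt
    rw [hsum, Finset.sum_ite, Finset.sum_const, Finset.sum_const]
    have h1 : (Finset.univ.filter (· ∈ R)).card = R.card := by simp
    have h2 : (Finset.univ.filter (¬ · ∈ R)).card = T - R.card := by
      simp [Finset.filter_not, Finset.card_sdiff_of_subset (Finset.subset_univ R)]
    rw [h1, h2, nsmul_eq_mul, nsmul_eq_mul, Nat.cast_sub hcard, hR]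
    field_simp
  rw [Finset.sum_pair (show (-1 : ℝ) ≠ 1 by norm_num),
    Finset.sum_pair hΔ0.ne, Finset.sum_pair hΔ0.ne]
  split_ifs with h1 h2 h3 h4 <;> try norm_num
  exfalso
  rename_i h2 h3 h4
  push_neg at h1 h2 h3 h4
  rw [hval] at h1 h2 h3 h4
  set aw := ip qs w; set bw := ip ws w; set aq := ip qs q; set bq := ip ws q
  have hP : (aw + bw) * (aq + bq) > 0 := by nlinarith
  have hM : (aw - bw) * (aq - bq) < 0 := by nlinarith
  have hPM : (aw - bw) * (aq - bq) < (aw + bw) * (aq + bq) := by linarith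
  nlinarith [mul_pos (sub_pos.2 hΔ2) (sub_pos.2 hPM)]
end
end

section
/- Under the core contextual dataset model, the negative empirical prompt-gradient at prompt q = 0 and head w satisfies, as an exact identity, Ĝ_q(0,w) = (1/n)Σ_{i=1}^n (y_i − ζ·α_i − β_i)·[ ((ζ − ζ²)·α_i − ζ·β_i)(q★ + y_i·w★) + Σ̂_i·w − (ζ·α_i + β_i)·γ_i ], where α_i = wᵀq★ + y_i·wᵀw★, γ_i = (1/T)Z_iᵀ1, β_i = γ_iᵀw, and Σ̂_i = (1/T)Z_iᵀZ_i. -/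
open MeasureTheory ProbabilityTheory Finset Filter

noncomputable section

/-- Empirical square loss of the prompt-attention model on `n` samples. -/
def Lhat {T d n : ℕ} (yv : Fin n → ℝ) (X : Fin n → Fin T → E d) (w q : E d) : ℝ :=
  (1 / (2 * (n : ℝ))) * ∑ i, (yv i - promptAtt w q (X i)) ^ 2

lemma promptAtt_hasGradientAt {T d : ℕ} (hT : 0 < T) (w : E d) (Y : Fin T → E d) :
    HasGradientAt (fun q => promptAtt w q Y)
      ((T : ℝ)⁻¹ • ∑ t, ip (Y t) w • Y t
        - ((∑ t, ip (Y t) w) / (T : ℝ) ^ 2) • ∑ t, Y t) 0 := by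
  have hT' : (T : ℝ) ≠ 0 := Nat.cast_ne_zero.mpr hT.ne'
  have hip : ∀ t : Fin T, HasFDerivAt (fun q : E d => ip (Y t) q) (innerSL ℝ (Y t)) 0 := by
    intro t
    simpa [ip] using (innerSL ℝ (Y t)).hasFDerivAt (x := (0 : E d))
  have hN : HasFDerivAt (fun q : E d => ∑ t, Real.exp (ip (Y t) q) * ip (Y t) w)
      (∑ t, ip (Y t) w • innerSL ℝ (Y t)) 0 := by
    apply HasFDerivAt.fun_sum
    intro t _
    have h := ((hip t).exp).mul_const (ip (Y t) w)
    simpa [ip, Real.exp_zero] using h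
  have hD : HasFDerivAt (fun q : E d => ∑ s, Real.exp (ip (Y s) q))
      (∑ s, innerSL ℝ (Y s)) 0 := by
    apply HasFDerivAt.fun_sum
    intro s _
    have h := (hip s).exp
    simpa [ip, Real.exp_zero] using h
  have hD0 : (∑ s, Real.exp (ip (Y s) (0 : E d))) = (T : ℝ) := by
    simp [ip, Real.exp_zero]
  have hinv : HasDerivAt (fun y : ℝ => y⁻¹) (-(((T : ℝ)) ^ 2)⁻¹)
      (∑ s, Real.exp (ip (Y s) (0 : E d))) := by
    rw [hD0]; exact hasDerivAt_inv hT'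
  have hDi : HasFDerivAt (fun q : E d => (∑ s, Real.exp (ip (Y s) q))⁻¹)
      ((-(((T : ℝ)) ^ 2)⁻¹) • (∑ s, innerSL ℝ (Y s))) 0 := by
    exact hinv.comp_hasFDerivAt (0 : E d) hD
  have hf := hN.mul hDi
  have hfun : (fun q => promptAtt w q Y)
      = fun q => (∑ t, Real.exp (ip (Y t) q) * ip (Y t) w) * (∑ s, Real.exp (ip (Y s) q))⁻¹ := by
    funext q
    simp only [promptAtt, softmax, div_eq_mul_inv, Finset.sum_mul]
    exact Finset.sum_congr rfl fun t _ => by ring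
  rw [hasGradientAt_iff_hasFDerivAt, hfun]
  convert hf using 1
  · rfl
  · rfl
  ext v
  simp only [InnerProductSpace.toDual_apply_apply, inner_sub_left, real_inner_smul_left, sum_inner,
    ContinuousLinearMap.add_apply, ContinuousLinearMap.smul_apply, ContinuousLinearMap.sum_apply,
    innerSL_apply_apply, smul_eq_mul, ip, inner_zero_right, Real.exp_zero, one_mul,
    Finset.sum_const, Finset.card_univ, Fintype.card_fin, nsmul_eq_mul, mul_one]
  ring

/-- Lemma: exact formula for the negative empirical prompt-gradient at
prompt `q = 0` and head `w` under the core contextual dataset model. -/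
theorem prompt_gradient_at_origin
    {T d n : ℕ} (hT : 0 < T) (hn : 0 < n)
    (ζ : ℝ) (hζ0 : 0 < ζ) (hζ1 : ζ < 1)
    (qs ws : E d) (w : E d)
    (yv : Fin n → ℝ) (hy : ∀ i, yv i = 1 ∨ yv i = -1)
    (Rset : Fin n → Finset (Fin T)) (hR : ∀ i, ((Rset i).card : ℝ) = ζ * T)
    (z : Fin n → Fin T → E d)
    (X : Fin n → Fin T → E d)
    (hX : ∀ i, X i = tokens (Rset i) qs ws (yv i) 0 0 (z i))
    -- the quantities `γᵢ, αᵢ, βᵢ, Σ̂ᵢw` of the lemma: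
    (γ : Fin n → E d) (hγ : ∀ i, γ i = (1 / (T : ℝ)) • ∑ t ∈ (Rset i)ᶜ, z i t)
    (α : Fin n → ℝ) (hα : ∀ i, α i = ip w qs + yv i * ip w ws)
    (β : Fin n → ℝ) (hβ : ∀ i, β i = ip (γ i) w)
    (Sw : Fin n → E d)
    (hSw : ∀ i, Sw i = (1 / (T : ℝ)) • ∑ t ∈ (Rset i)ᶜ, ip (z i t) w • z i t) :
    -gradient (fun q => Lhat yv X w q) 0 =
      (1 / (n : ℝ)) • ∑ i,
        (yv i - ζ * α i - β i) •
          (((ζ - ζ ^ 2) * α i - ζ * β i) • (qs + yv i • ws)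
            + Sw i - (ζ * α i + β i) • γ i) := by
  have hT' : (T : ℝ) ≠ 0 := Nat.cast_ne_zero.mpr hT.ne'
  set f0 : Fin n → ℝ := fun i => promptAtt w 0 (X i) with hf0def
  set g : Fin n → E d := fun i =>
    (T : ℝ)⁻¹ • ∑ t, ip (X i t) w • X i t
      - ((∑ t, ip (X i t) w) / (T : ℝ) ^ 2) • ∑ t, X i t with hgdef
  -- gradient of Lhat at 0
  have hgrad : HasGradientAt (fun q => Lhat yv X w q)
      ((1 / (2 * (n : ℝ))) • ∑ i, ((2 : ℝ) * (yv i - f0 i) * -1) • g i) 0 := by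
    rw [hasGradientAt_iff_hasFDerivAt]
    have hsq : ∀ i : Fin n, HasFDerivAt (fun q => (yv i - promptAtt w q (X i)) ^ 2)
        (((2 : ℝ) * (yv i - f0 i) * -1) • (InnerProductSpace.toDual ℝ (E d) (g i))) 0 := by
      intro i
      have hgi := (promptAtt_hasGradientAt hT w (X i)).hasFDerivAt
      have hsq' := ((hasDerivAt_id (f0 i)).const_sub (yv i)).pow 2
      have h := hsq'.comp_hasFDerivAt (0 : E d) hgi
      have h2 : ((2:ℕ):ℝ) * (yv i - f0 i) ^ (2 - 1) * -1 = (2 : ℝ) * (yv i - f0 i) * -1 := by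
        norm_num
      rw [Function.comp_def, id_eq] at h
      rw [h2] at h
      exact h
    have hsum := HasFDerivAt.fun_sum (fun i (_ : i ∈ Finset.univ) => hsq i)
    have hL := hsum.const_mul (1 / (2 * (n : ℝ)))
    have hTD : InnerProductSpace.toDual ℝ (E d)
        ((1 / (2 * (n : ℝ))) • ∑ i, ((2 : ℝ) * (yv i - f0 i) * -1) • g i)
        = (1 / (2 * (n : ℝ))) • ∑ i, ((2 : ℝ) * (yv i - f0 i) * -1) •
            (InnerProductSpace.toDual ℝ (E d) (g i)) := by
      simp [_root_.map_smul, map_sum]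
    rw [hTD]
    exact hL
  rw [hgrad.gradient]
  -- per-sample algebra
  have key : ∀ i : Fin n, ((2 : ℝ) * (yv i - f0 i) * -1) • g i
      = (-2 : ℝ) • ((yv i - ζ * α i - β i) •
          (((ζ - ζ ^ 2) * α i - ζ * β i) • (qs + yv i • ws)
            + Sw i - (ζ * α i + β i) • γ i)) := by
    intro i
    have hXi : ∀ t, X i t = if t ∈ Rset i then (qs + yv i • ws) else z i t := by
      intro t; rw [hX i]; simp [tokens]
    have hcard : ((Rset i).card : ℝ) = ζ * T := hR i
    have hα' : ip (qs + yv i • ws) w = α i := by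
      rw [hα]
      simp only [ip, inner_add_left, real_inner_smul_left]
      rw [real_inner_comm w qs, real_inner_comm w ws]
    have hβ' : (T : ℝ) * β i = ∑ t ∈ (Rset i)ᶜ, ip (z i t) w := by
      rw [hβ i, hγ i]
      simp only [ip, real_inner_smul_left, sum_inner]
      field_simp
    have hγ' : (T : ℝ) • γ i = ∑ t ∈ (Rset i)ᶜ, z i t := by
      rw [hγ i, smul_smul]
      rw [show (T : ℝ) * (1 / (T : ℝ)) = 1 by field_simp]
      rw [one_smul]
    have hSw' : (T : ℝ) • Sw i = ∑ t ∈ (Rset i)ᶜ, ip (z i t) w • z i t := by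
      rw [hSw i, smul_smul]
      rw [show (T : ℝ) * (1 / (T : ℝ)) = 1 by field_simp]
      rw [one_smul]
    have hsum1 : ∑ t, ip (X i t) w = ζ * T * α i + (T : ℝ) * β i := by
      rw [← Finset.sum_add_sum_compl (Rset i), hβ']
      congr 1
      · rw [Finset.sum_congr rfl fun t ht => by rw [hXi t, if_pos ht]]
        rw [Finset.sum_const, nsmul_eq_mul, hcard, hα']
      · exact Finset.sum_congr rfl fun t ht => by
          rw [hXi t, if_neg (Finset.mem_compl.mp ht)]
    have hsum2 : ∑ t, X i t = (ζ * T) • (qs + yv i • ws) + (T : ℝ) • γ i := by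
      rw [← Finset.sum_add_sum_compl (Rset i), hγ']
      congr 1
      · rw [Finset.sum_congr rfl fun t ht => by rw [hXi t, if_pos ht]]
        rw [Finset.sum_const, ← Nat.cast_smul_eq_nsmul ℝ, hcard]
      · exact Finset.sum_congr rfl fun t ht => by
          rw [hXi t, if_neg (Finset.mem_compl.mp ht)]
    have hsum3 : ∑ t, ip (X i t) w • X i t
        = (ζ * T) • (α i • (qs + yv i • ws)) + (T : ℝ) • Sw i := by
      rw [← Finset.sum_add_sum_compl (Rset i), hSw']
      congr 1
      · rw [Finset.sum_congr rfl fun t ht => by rw [hXi t, if_pos ht]]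
        rw [Finset.sum_const, ← Nat.cast_smul_eq_nsmul ℝ, hcard, hα']
      · exact Finset.sum_congr rfl fun t ht => by
          rw [hXi t, if_neg (Finset.mem_compl.mp ht)]
    have hf0 : f0 i = ζ * α i + β i := by
      have hz : ∀ s, ip (X i s) (0 : E d) = 0 := fun s => by simp [ip]
      simp only [hf0def]
      simp only [promptAtt, softmax, hz, Real.exp_zero, Finset.sum_const,
        Finset.card_univ, Fintype.card_fin, nsmul_eq_mul, mul_one]
      rw [← Finset.mul_sum, hsum1]
      field_simp
    simp only [hgdef]
    rw [hsum1, hsum2, hsum3, hf0]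
    match_scalars <;> field_simp <;> ring
  rw [Finset.sum_congr rfl fun i _ => key i, ← Finset.smul_sum, smul_smul, ← neg_smul]
  congr 1
  field_simp
end
end

section
/- Under the core contextual dataset model, suppose the first two gradient steps ŵ_1, q̂_1 satisfy: (i) ‖ŵ_1‖ ≤ c_η·ζW/Q² for a constant c_η > 0; and (ii) for some ε > 0 there exists δ (independent of ε) with P( ‖Xᵀφ(X·q̂_1) − (q★ + y·w★)‖ ≤ ε ) ≥ 1 − δ for a fresh sample (X, y). Let the third gradient step be ŵ_2 = η·Ĝ_w(q̂_1, ŵ_1) computed on a fresh batch of n samples. Then there are absolute constants c, C > 0 such that, for all sufficiently small ε and c_η, with probability at least 1 − nδ − 2e^{−cn}, ŵ_2ᵀw★ / ‖ŵ_2‖ ≥ C·W²/Q. -/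
open MeasureTheory ProbabilityTheory Finset Filter

noncomputable section

/-- Attention feature map `Xᵀ φ(X q) = Σ_t φ(Xq)_t x_t`. -/
def attnFeature {T d : ℕ} (q : E d) (X : Fin T → E d) : E d :=
  ∑ t, softmax (fun s => ip (X s) q) t • X t

/-- A family, indexed by `ι`, of i.i.d. samples from the core contextual dataset model
with label `y = ±1` uniform, relevance sets of size `ζT`, and i.i.d. centered
`σ`-subGaussian noise tokens with symmetric law and zero third moment. -/
structure CoreSamples (T d : ℕ) (ζ σ : ℝ) (qs ws : E d)
    {Ω : Type} [MeasurableSpace Ω] (μ : Measure Ω) (ι : Type) where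
  /-- labels -/
  yv : ι → Ω → ℝ
  /-- noise tokens -/
  z : ι → Fin T → Ω → E d
  /-- relevance sets -/
  Rset : ι → Finset (Fin T)
  hRcard : ∀ i, ((Rset i).card : ℝ) = ζ * T
  hy_meas : ∀ i, Measurable (yv i)
  hz_meas : ∀ i t, Measurable (z i t)
  hy_one : ∀ i, μ {ω | yv i ω = 1} = 1 / 2
  hy_mone : ∀ i, μ {ω | yv i ω = -1} = 1 / 2
  indep : iIndepFun
    (fun i ω => (yv i ω, fun t => z i t ω)) μ
  hyz : ∀ i, IndepFun (yv i) (fun ω t => z i t ω) μ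
  hz_indep : ∀ i, iIndepFun (fun t ω => z i t ω) μ
  hz_mean : ∀ i t, ∫ ω, z i t ω ∂μ = 0
  hz_subg : ∀ i t (v : E d) (s : ℝ),
    ∫ ω, Real.exp (s * ip (z i t ω) v) ∂μ ≤ Real.exp (σ ^ 2 * s ^ 2 * ‖v‖ ^ 2 / 2)
  hz_symm : ∀ i t, Measure.map (fun ω => z i t ω) μ = Measure.map (fun ω => -(z i t ω)) μ
  hz_third : ∀ i t (a b c : E d),
    ∫ ω, ip (z i t ω) a * ip (z i t ω) b * ip (z i t ω) c ∂μ = 0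
  hsample_id : ∀ i j, Measure.map (fun ω => (yv i ω, fun t => z i t ω)) μ
      = Measure.map (fun ω => (yv j ω, fun t => z j t ω)) μ
  hz_id : ∀ i t j s, Measure.map (z i t) μ = Measure.map (z j s) μ

/-- The token matrix of the `i`-th sample (core model: `δ = (0,0)`). -/
def sampleX {T d : ℕ} {ζ σ : ℝ} {qs ws : E d} {Ω : Type} [MeasurableSpace Ω]
    {μ : Measure Ω} {ι : Type} (M : CoreSamples T d ζ σ qs ws μ ι) (i : ι) (ω : Ω) :
    Fin T → E d :=
  tokens (M.Rset i) qs ws (M.yv i ω) 0 0 fun t => M.z i t ω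

/-- Negative empirical head-gradient `Ĝ_w(q, w) = -∇_w L̂(w, q)`. -/
def GwHat {T d n : ℕ} {ζ σ : ℝ} {qs ws : E d} {Ω : Type} [MeasurableSpace Ω]
    {μ : Measure Ω} (M : CoreSamples T d ζ σ qs ws μ (Fin n)) (q w : E d) (ω : Ω) :
    E d :=
  -gradient (fun w' => Lhat (fun i => M.yv i ω) (fun i => sampleX M i ω) w' q) w

/-- Negative empirical prompt-gradient `Ĝ_q(q, w) = -∇_q L̂(w, q)`. -/
def GqHat {T d n : ℕ} {ζ σ : ℝ} {qs ws : E d} {Ω : Type} [MeasurableSpace Ω]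
    {μ : Measure Ω} (M : CoreSamples T d ζ σ qs ws μ (Fin n)) (q w : E d) (ω : Ω) :
    E d :=
  -gradient (fun q' => Lhat (fun i => M.yv i ω) (fun i => sampleX M i ω) w q') q

/-- Negative empirical head-gradient as a function of raw data. -/
def GwHatRaw {T d n : ℕ} (yv : Fin n → ℝ) (X : Fin n → Fin T → E d) (q w : E d) :
    E d :=
  -gradient (fun w' => Lhat yv X w' q) w

/-- Negative empirical prompt-gradient as a function of raw data. -/
def GqHatRaw {T d n : ℕ} (yv : Fin n → ℝ) (X : Fin n → Fin T → E d) (q w : E d) :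
    E d :=
  -gradient (fun q' => Lhat yv X w q') q

lemma promptAtt_eq_ip {T d : ℕ} (w q : E d) (X : Fin T → E d) :
    promptAtt w q X = ip (attnFeature q X) w := by
  simp [promptAtt, attnFeature, ip, sum_inner, real_inner_smul_left, Finset.mul_sum, mul_assoc]

lemma gwhatRaw_eq {T d n : ℕ} (hn : (n:ℝ) ≠ 0) (yv : Fin n → ℝ) (X : Fin n → Fin T → E d)
    (q w : E d) :
    GwHatRaw yv X q w
      = (n:ℝ)⁻¹ • ∑ i, (yv i - ip (attnFeature q (X i)) w) • attnFeature q (X i) := by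
  set a : Fin n → E d := fun i => attnFeature q (X i) with ha
  have hL : (fun w' => Lhat yv X w' q)
      = fun w' => (1/(2*(n:ℝ))) * ∑ i, (yv i - inner ℝ (a i) w') ^ 2 := by
    funext w'
    simp [Lhat, promptAtt_eq_ip, ip, ha]
  have hF : HasFDerivAt (fun w' : E d => Lhat yv X w' q)
      ((1/(2*(n:ℝ))) • ∑ i : Fin n, (2 * (yv i - inner ℝ (a i) w)) • (-(innerSL ℝ (a i)))) w := by
    rw [hL]
    refine HasFDerivAt.const_mul ?_ _
    refine HasFDerivAt.fun_sum fun i _ => ?_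
    have h1 : HasFDerivAt (fun w' : E d => yv i - inner ℝ (a i) w') (-(innerSL ℝ (a i))) w := by
      simpa using (hasFDerivAt_const (yv i) w).fun_sub (innerSL ℝ (a i)).hasFDerivAt
    simpa [pow_two, two_mul, add_smul] using h1.fun_mul h1
  have hG : HasGradientAt (fun w' : E d => Lhat yv X w' q)
      (-((n:ℝ)⁻¹ • ∑ i, (yv i - inner ℝ (a i) w) • a i)) w := by
    have hdual : (InnerProductSpace.toDual ℝ (E d))
        (-((n:ℝ)⁻¹ • ∑ i, (yv i - inner ℝ (a i) w) • a i))
        = ((1/(2*(n:ℝ))) • ∑ i : Fin n, (2 * (yv i - inner ℝ (a i) w)) • (-(innerSL ℝ (a i)))) := by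
      apply ContinuousLinearMap.ext
      intro v
      simp only [InnerProductSpace.toDual_apply_apply, ContinuousLinearMap.smul_apply,
        ContinuousLinearMap.sum_apply, ContinuousLinearMap.neg_apply, innerSL_apply_apply,
        inner_neg_left, real_inner_smul_left, sum_inner, smul_eq_mul]
      rw [Finset.mul_sum, Finset.mul_sum, ← Finset.sum_neg_distrib]
      refine Finset.sum_congr rfl fun i _ => ?_
      field_simp
    rw [hasGradientAt_iff_hasFDerivAt, hdual]
    exact hF
  rw [GwHatRaw, hG.gradient, neg_neg]
  rfl

lemma attnFeature_continuous {T d : ℕ} (q : E d) :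
    Continuous fun X : Fin T → E d => attnFeature q X := by
  unfold attnFeature softmax ip
  apply continuous_finset_sum
  intro t _
  have hne : Nonempty (Fin T) := ⟨t⟩
  refine Continuous.fun_smul (Continuous.div₀ ?_ ?_ ?_) (continuous_apply t : Continuous fun X : Fin T → E d => X t)
  · exact Real.continuous_exp.comp ((continuous_apply t).inner continuous_const)
  · exact continuous_finset_sum _ fun s _ =>
      Real.continuous_exp.comp ((continuous_apply s).inner continuous_const)
  · intro X
    have : 0 < ∑ s : Fin T, Real.exp (inner ℝ (X s) q) :=
      Finset.sum_pos (fun s _ => Real.exp_pos _) Finset.univ_nonempty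
    exact this.ne'

lemma mgf_pm_one {Ω : Type} [MeasurableSpace Ω] {μ : Measure Ω} [IsProbabilityMeasure μ]
    (y : Ω → ℝ) (hy : Measurable y) (h1 : μ {ω | y ω = 1} = 1/2)
    (hae : ∀ᵐ ω ∂μ, y ω = 1 ∨ y ω = -1) (t : ℝ) :
    mgf y μ t ≤ Real.exp (t^2/2) := by
  set A : Set Ω := {ω | y ω = 1} with hA
  have hAm : MeasurableSet A := hy (measurableSet_singleton 1)
  set g : Ω → ℝ := fun ω => A.indicator (fun _ => Real.exp t - Real.exp (-t)) ω + Real.exp (-t)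
    with hg
  have hfg : (fun ω => Real.exp (t * y ω)) =ᵐ[μ] g := by
    filter_upwards [hae] with ω h
    rcases h with h | h
    · have : ω ∈ A := h
      simp [hg, Set.indicator_of_mem this, h]
    · have : ω ∉ A := by simp [hA, h]; norm_num
      simp [hg, Set.indicator_of_notMem this, h]
  have hcosh : mgf y μ t = Real.cosh t := by
    rw [mgf, integral_congr_ae hfg, hg]
    rw [integral_add (((integrable_const _).indicator hAm)) (integrable_const _)]
    rw [integral_indicator_const _ hAm, integral_const]
    have hr : μ.real A = 1/2 := by simp [measureReal_def, h1]
    simp [h1, Real.cosh_eq, hr]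
    ring
  rw [hcosh]
  exact Real.cosh_le_exp_half_sq t

lemma hoeff_pm_one {Ω : Type} [MeasurableSpace Ω] {μ : Measure Ω} [IsProbabilityMeasure μ] {n : ℕ}
    (y : Fin n → Ω → ℝ) (hmeas : ∀ i, Measurable (y i))
    (hind : iIndepFun y μ)
    (h1 : ∀ i, μ {ω | y i ω = 1} = 1/2)
    (hae : ∀ i, ∀ᵐ ω ∂μ, y i ω = 1 ∨ y i ω = -1) :
    μ {ω | (n:ℝ)/4 < |∑ i, y i ω|} ≤ ENNReal.ofReal (2 * Real.exp (-(n:ℝ)/32)) := by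
  set S : Ω → ℝ := fun ω => ∑ i, y i ω with hS
  have hSmeas : Measurable S := Finset.measurable_sum _ fun i _ => hmeas i
  have haeAll : ∀ᵐ ω ∂μ, ∀ i, y i ω = 1 ∨ y i ω = -1 := ae_all_iff.2 hae
  have hint : ∀ t : ℝ, Integrable (fun ω => Real.exp (t * S ω)) μ := by
    intro t
    refine Integrable.mono' (integrable_const (Real.exp (|t| * n)))
      ((hSmeas.const_mul t).exp.aestronglyMeasurable) ?_
    filter_upwards [haeAll] with ω h
    rw [Real.norm_eq_abs, Real.abs_exp, Real.exp_le_exp]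
    have hSb : |S ω| ≤ (n:ℝ) := by
      calc |S ω| ≤ ∑ i, |y i ω| := Finset.abs_sum_le_sum_abs _ _
        _ ≤ ∑ _i : Fin n, (1:ℝ) := by
            refine Finset.sum_le_sum fun i _ => ?_
            rcases h i with h' | h' <;> simp [h']
        _ = (n:ℝ) := by simp
    calc t * S ω ≤ |t * S ω| := le_abs_self _
      _ = |t| * |S ω| := abs_mul _ _
      _ ≤ |t| * n := by gcongr <;> exact abs_nonneg t
  have hmgf : ∀ t : ℝ, mgf S μ t ≤ Real.exp ((n:ℝ) * t^2/2) := by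
    intro t
    have hSfun : S = ∑ i, y i := by funext ω; simp [hS]
    rw [hSfun, iIndepFun.mgf_sum hind hmeas]
    calc ∏ i : Fin n, mgf (y i) μ t ≤ ∏ _i : Fin n, Real.exp (t^2/2) := by
          refine Finset.prod_le_prod (fun i _ => mgf_nonneg) fun i _ => ?_
          exact mgf_pm_one (y i) (hmeas i) (h1 i) (hae i) t
      _ = Real.exp ((n:ℝ) * t^2/2) := by
          rw [Finset.prod_const, Finset.card_fin, ← Real.exp_nat_mul]
          ring_nf
  have hup : (μ {ω | (n:ℝ)/4 ≤ S ω}).toReal ≤ Real.exp (-(n:ℝ)/32) := by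
    have := measure_ge_le_exp_mul_mgf (μ := μ) (X := S) (t := 1/4) ((n:ℝ)/4) (by norm_num)
      (hint _)
    refine this.trans ?_
    calc Real.exp (-(1/4) * ((n:ℝ)/4)) * mgf S μ (1/4)
        ≤ Real.exp (-(1/4) * ((n:ℝ)/4)) * Real.exp ((n:ℝ) * (1/4)^2/2) :=
          mul_le_mul_of_nonneg_left (hmgf _) (Real.exp_pos _).le
      _ = Real.exp (-(n:ℝ)/32) := by rw [← Real.exp_add]; ring_nf
  have hdown : (μ {ω | S ω ≤ -((n:ℝ)/4)}).toReal ≤ Real.exp (-(n:ℝ)/32) := by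
    have := measure_le_le_exp_mul_mgf (μ := μ) (X := S) (t := -(1/4)) (-((n:ℝ)/4))
      (by norm_num) (hint _)
    refine this.trans ?_
    calc Real.exp (-(-(1/4)) * (-((n:ℝ)/4))) * mgf S μ (-(1/4))
        ≤ Real.exp (-(-(1/4)) * (-((n:ℝ)/4))) * Real.exp ((n:ℝ) * (-(1/4))^2/2) :=
          mul_le_mul_of_nonneg_left (hmgf _) (Real.exp_pos _).le
      _ = Real.exp (-(n:ℝ)/32) := by rw [← Real.exp_add]; ring_nf
  have hsub : {ω | (n:ℝ)/4 < |S ω|} ⊆ {ω | (n:ℝ)/4 ≤ S ω} ∪ {ω | S ω ≤ -((n:ℝ)/4)} := by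
    intro ω h
    simp only [Set.mem_setOf_eq] at h
    rcases le_or_gt 0 (S ω) with h0 | h0
    · left; rw [abs_of_nonneg h0] at h; exact h.le
    · right
      rw [abs_of_neg h0] at h
      exact (by linarith : S ω ≤ -((n:ℝ)/4))
  calc μ {ω | (n:ℝ)/4 < |S ω|} ≤ μ ({ω | (n:ℝ)/4 ≤ S ω} ∪ {ω | S ω ≤ -((n:ℝ)/4)}) :=
        measure_mono hsub
    _ ≤ μ {ω | (n:ℝ)/4 ≤ S ω} + μ {ω | S ω ≤ -((n:ℝ)/4)} := measure_union_le _ _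
    _ ≤ ENNReal.ofReal (Real.exp (-(n:ℝ)/32)) + ENNReal.ofReal (Real.exp (-(n:ℝ)/32)) := by
        gcongr
        · rw [← ENNReal.ofReal_toReal (measure_ne_top μ _)]
          exact ENNReal.ofReal_le_ofReal hup
        · rw [← ENNReal.ofReal_toReal (measure_ne_top μ _)]
          exact ENNReal.ofReal_le_ofReal hdown
    _ = ENNReal.ofReal (2 * Real.exp (-(n:ℝ)/32)) := by
        rw [← ENNReal.ofReal_add (Real.exp_pos _).le (Real.exp_pos _).le]
        norm_num [two_mul]

lemma det_core {d n : ℕ} (hn : 0 < n) (qs ws w1 : E d) {W Q ε cη ζ : ℝ}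
    (hW : W = ‖ws‖) (hQ : Q = ‖qs‖) (hW0 : 0 < W) (hWQ : W < Q)
    (hP : |ip qs ws| ≤ W^2)
    (hε : 0 ≤ ε) (hεW : ε ≤ W/100)
    (hζ0 : 0 < ζ) (hζ1 : ζ < 1) (hcη : 0 < cη) (hcηs : cη ≤ 1/100)
    (hw1 : ‖w1‖ ≤ cη * ζ * W / Q^2)
    (y : Fin n → ℝ) (a : Fin n → E d)
    (hy : ∀ i, y i = 1 ∨ y i = -1)
    (ha : ∀ i, ‖a i - (qs + y i • ws)‖ ≤ ε)
    (hS : |∑ i, y i| ≤ (n:ℝ)/4) :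
    (1/8) * W^2 / Q ≤
      ip ws ((n:ℝ)⁻¹ • ∑ i, (y i - ip (a i) w1) • a i) /
        ‖(n:ℝ)⁻¹ • ∑ i, (y i - ip (a i) w1) • a i‖ := by
  have hQ0 : 0 < Q := hW0.trans hWQ
  have hn' : (0:ℝ) < n := by exact_mod_cast hn
  set f : Fin n → ℝ := fun i => ip (a i) w1 with hf
  set g : E d := (n:ℝ)⁻¹ • ∑ i, (y i - f i) • a i with hg
  have hyabs : ∀ i, |y i| = 1 := by
    intro i; rcases hy i with h | h <;> simp [h]
  have hyy : ∀ i, y i * y i = 1 := by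
    intro i; rcases hy i with h | h <;> simp [h]
  have hanorm : ∀ i, ‖a i‖ ≤ Q + W + ε := by
    intro i
    have h1 : ‖a i‖ ≤ ‖qs + y i • ws‖ + ε := by
      have h0 := norm_sub_norm_le (a i) (qs + y i • ws)
      linarith [ha i]
    have h2 : ‖qs + y i • ws‖ ≤ Q + W := by
      calc ‖qs + y i • ws‖ ≤ ‖qs‖ + ‖y i • ws‖ := norm_add_le _ _
        _ = Q + W := by rw [norm_smul, Real.norm_eq_abs, hyabs i, one_mul, hW, hQ]
    linarith
  have hQ3 : Q + W + ε ≤ 3*Q := by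
    have : ε ≤ W := le_trans hεW (by linarith)
    linarith
  have hfb : ∀ i, |f i| ≤ 3/100 := by
    intro i
    have h1 : |f i| ≤ ‖a i‖ * ‖w1‖ := abs_real_inner_le_norm (a i) w1
    have h2 : ‖a i‖ * ‖w1‖ ≤ (3*Q) * (cη * ζ * W / Q^2) := by
      apply mul_le_mul ((hanorm i).trans hQ3) hw1 (norm_nonneg _)
      positivity
    have h3 : (3*Q) * (cη * ζ * W / Q^2) = 3 * cη * (ζ * (W/Q)) := by
      field_simp
    have hWQ1 : W/Q ≤ 1 := (div_le_one hQ0).2 hWQ.le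
    have hz : ζ * (W/Q) ≤ 1 :=
      mul_le_one₀ hζ1.le (div_nonneg hW0.le hQ0.le) hWQ1
    have hz0 : 0 ≤ ζ * (W/Q) := by positivity
    nlinarith [h1, h2]
  set P : ℝ := ip ws qs with hPdef
  have hPb : |P| ≤ W^2 := by
    rw [hPdef, ip, real_inner_comm]; exact hP
  set u : Fin n → ℝ := fun i => ip ws (a i - (qs + y i • ws)) with hu
  have hub : ∀ i, |u i| ≤ W^2/100 := by
    intro i
    have h1 : |u i| ≤ ‖ws‖ * ‖a i - (qs + y i • ws)‖ := abs_real_inner_le_norm ws (a i - (qs + y i • ws))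
    have h2 : ‖ws‖ * ‖a i - (qs + y i • ws)‖ ≤ W * ε := by
      rw [← hW]; exact mul_le_mul_of_nonneg_left (ha i) hW0.le
    nlinarith
  have hipws : ∀ i, ip ws (a i) = P + y i * W^2 + u i := by
    intro i
    have h0 : ip ws (a i) = ip ws (qs + y i • ws) + u i := by
      simp only [hu, ip, inner_sub_right]
      ring
    have h2 : ip ws (qs + y i • ws) = P + y i * W^2 := by
      simp only [ip, inner_add_right, real_inner_smul_right]
      rw [real_inner_self_eq_norm_sq, ← hW, hPdef, ip]
    rw [h0, h2]
  have hN : ip ws g = (n:ℝ)⁻¹ * ∑ i, (y i - f i) * ip ws (a i) := by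
    simp only [hg, ip, real_inner_smul_right, inner_sum]
  set R : Fin n → ℝ := fun i => y i * u i - f i * (P + y i * W^2 + u i) with hR
  have hterm : ∀ i, (y i - f i) * ip ws (a i) = W^2 + y i * P + R i := by
    intro i
    rw [hipws i, hR]
    linear_combination (W^2) * hyy i
  have hRb : ∀ i, |R i| ≤ W^2/100 + (3/100)*(W^2 + W^2 + W^2/100) := by
    intro i
    have h1 : |y i * u i| ≤ W^2/100 := by
      rw [abs_mul, hyabs i, one_mul]; exact hub i
    have h2 : |f i * (P + y i * W^2 + u i)| ≤ (3/100)*(W^2 + W^2 + W^2/100) := by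
      rw [abs_mul]
      apply mul_le_mul (hfb i) _ (abs_nonneg _) (by norm_num)
      calc |P + y i * W^2 + u i| ≤ |P + y i * W^2| + |u i| := abs_add_le _ _
        _ ≤ |P| + |y i * W^2| + |u i| := by gcongr; exact abs_add_le _ _
        _ ≤ W^2 + W^2 + W^2/100 := by
            have : |y i * W^2| = W^2 := by
              rw [abs_mul, hyabs i, one_mul, abs_of_nonneg (sq_nonneg W)]
            rw [this]
            exact add_le_add (add_le_add hPb le_rfl) (hub i)
    calc |R i| ≤ |y i * u i| + |f i * (P + y i * W^2 + u i)| := abs_sub _ _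
      _ ≤ W^2/100 + (3/100)*(W^2 + W^2 + W^2/100) := add_le_add h1 h2
  have hsum : ∑ i, (y i - f i) * ip ws (a i)
      = (n:ℝ) * W^2 + P * (∑ i, y i) + ∑ i, R i := by
    rw [Finset.sum_congr rfl fun i _ => hterm i]
    rw [Finset.sum_add_distrib, Finset.sum_add_distrib, Finset.sum_const, Finset.mul_sum]
    simp [mul_comm]
  have hRsum : |∑ i, R i| ≤ (n:ℝ) * (W^2/100 + (3/100)*(W^2 + W^2 + W^2/100)) := by
    calc |∑ i, R i| ≤ ∑ i, |R i| := Finset.abs_sum_le_sum_abs _ _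
      _ ≤ ∑ _i : Fin n, (W^2/100 + (3/100)*(W^2 + W^2 + W^2/100)) :=
          Finset.sum_le_sum fun i _ => hRb i
      _ = (n:ℝ) * (W^2/100 + (3/100)*(W^2 + W^2 + W^2/100)) := by
          rw [Finset.sum_const, Finset.card_fin]; simp [nsmul_eq_mul]; ring
  have hPS : |P * (∑ i, y i)| ≤ W^2 * ((n:ℝ)/4) := by
    rw [abs_mul]
    exact mul_le_mul hPb hS (abs_nonneg _) (sq_nonneg W)
  have hNlow : W^2/2 ≤ ip ws g := by
    rw [hN, hsum]
    have hW2 : 0 ≤ W^2 := sq_nonneg W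
    have hcoef : W^2/2 ≤ W^2 - W^2/4 - (W^2/100 + (3/100)*(W^2 + W^2 + W^2/100)) := by
      linarith
    have h1 : (n:ℝ) * (W^2/2) ≤ (n:ℝ) * W^2 + P * (∑ i, y i) + ∑ i, R i := by
      have hp1 : -(W^2 * ((n:ℝ)/4)) ≤ P * (∑ i, y i) := neg_le_of_abs_le hPS
      have hp2 : -((n:ℝ) * (W^2/100 + (3/100)*(W^2 + W^2 + W^2/100))) ≤ ∑ i, R i :=
        neg_le_of_abs_le hRsum
      have hmul : (n:ℝ) * (W^2/2)
          ≤ (n:ℝ) * (W^2 - W^2/4 - (W^2/100 + (3/100)*(W^2 + W^2 + W^2/100))) :=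
        mul_le_mul_of_nonneg_left hcoef hn'.le
      have heq : (n:ℝ) * (W^2 - W^2/4 - (W^2/100 + (3/100)*(W^2 + W^2 + W^2/100)))
          = (n:ℝ) * W^2 - W^2 * ((n:ℝ)/4)
            - (n:ℝ) * (W^2/100 + (3/100)*(W^2 + W^2 + W^2/100)) := by ring
      rw [heq] at hmul
      linarith
    calc W^2/2 = (n:ℝ)⁻¹ * ((n:ℝ) * (W^2/2)) := by field_simp
      _ ≤ (n:ℝ)⁻¹ * ((n:ℝ) * W^2 + P * (∑ i, y i) + ∑ i, R i) := by
          apply mul_le_mul_of_nonneg_left h1 (by positivity)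
  have hD : ‖g‖ ≤ 4*Q := by
    have h1 : ‖g‖ ≤ (n:ℝ)⁻¹ * ∑ i, ‖(y i - f i) • a i‖ := by
      rw [hg, norm_smul]
      simp only [norm_inv, Real.norm_natCast]
      exact mul_le_mul_of_nonneg_left (norm_sum_le _ _) (by positivity)
    have h2 : ∀ i, ‖(y i - f i) • a i‖ ≤ (1 + 3/100) * (3*Q) := by
      intro i
      rw [norm_smul]
      apply mul_le_mul _ ((hanorm i).trans hQ3) (norm_nonneg _) (by norm_num)
      calc ‖y i - f i‖ = |y i - f i| := rfl
        _ ≤ |y i| + |f i| := abs_sub _ _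
        _ ≤ 1 + 3/100 := add_le_add (le_of_eq (hyabs i)) (hfb i)
    calc ‖g‖ ≤ (n:ℝ)⁻¹ * ∑ i, ‖(y i - f i) • a i‖ := h1
      _ ≤ (n:ℝ)⁻¹ * ∑ _i : Fin n, ((1 + 3/100) * (3*Q)) := by
          apply mul_le_mul_of_nonneg_left (Finset.sum_le_sum fun i _ => h2 i) (by positivity)
      _ = (1 + 3/100) * (3*Q) := by
          rw [Finset.sum_const, Finset.card_fin]
          simp [nsmul_eq_mul]
          field_simp
      _ ≤ 4*Q := by linarith
  have hg0 : 0 < ‖g‖ := by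
    have h1 : ip ws g ≤ W * ‖g‖ := by
      rw [hW]
      exact (real_inner_le_norm ws g)
    rcases (norm_nonneg g).lt_or_eq with h | h
    · exact h
    · exfalso
      rw [← h, mul_zero] at h1
      have hp : 0 < W^2/2 := by positivity
      linarith
  have hW2pos : (0:ℝ) ≤ W^2/2 := by positivity
  have hfinal : (W^2/2) / (4*Q) ≤ ip ws g / ‖g‖ :=
    div_le_div₀ (hW2pos.trans hNlow) hNlow hg0 hD
  have heq : (1/8) * W^2 / Q = (W^2/2)/(4*Q) := by
    rw [div_eq_div_iff hQ0.ne' (by positivity : (0:ℝ) < 4*Q).ne']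
    ring
  rw [heq]
  exact hfinal

/-- Lemma: the third gradient step has positive correlation with
`w★`.  Given the first two steps `ŵ₁, q̂₁` with `‖ŵ₁‖ ≤ c_η ζW/Q²` and attention
features `ε`-close to the signal token with probability `1 - δ`, the third step
`ŵ₂ = η Ĝ_w(q̂₁, ŵ₁)` on a fresh batch satisfies `ŵ₂ᵀw★/‖ŵ₂‖ ≥ C·W²/Q` with
probability at least `1 - nδ - 2e^{-cn}`. -/
theorem third_gradient_step :
    ∀ wlo : ℝ, 0 < wlo →
    ∃ c C εstar cηstar : ℝ, 0 < c ∧ 0 < C ∧ 0 < εstar ∧ 0 < cηstar ∧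
      ∀ (T d n : ℕ), 0 < T → 0 < n →
      ∀ (ζ σ : ℝ), 0 < ζ → ζ < 1 → 0 < σ →
      ∀ (qs ws : E d) (W Q ρ : ℝ), W = ‖ws‖ → Q = ‖qs‖ → ρ = ip qs ws / (Q * W) →
        wlo ≤ W → W < Q → |ρ| ≤ W / Q →
      ∀ (Ω : Type) (mΩ : MeasurableSpace Ω) (μ : Measure Ω), IsProbabilityMeasure μ →
      ∀ (M : CoreSamples T d ζ σ qs ws μ (Fin n)),
      ∀ ε : ℝ, 0 < ε → ε ≤ εstar →
      ∀ cη : ℝ, 0 < cη → cη ≤ cηstar →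
      ∀ δ : ℝ, 0 ≤ δ →
      ∀ w1 q1 : E d,
        ‖w1‖ ≤ cη * ζ * W / Q ^ 2 →
        (∀ i, ENNReal.ofReal (1 - δ) ≤
          μ {ω | ‖attnFeature q1 (sampleX M i ω) - (qs + M.yv i ω • ws)‖ ≤ ε}) →
      ∀ η : ℝ, 0 < η →
        ENNReal.ofReal (1 - n * δ - 2 * Real.exp (-c * n)) ≤
          μ {ω | C * W ^ 2 / Q ≤
              ip ws (η • GwHatRaw (fun i => M.yv i ω) (fun i => sampleX M i ω) q1 w1) /
                ‖η • GwHatRaw (fun i => M.yv i ω) (fun i => sampleX M i ω) q1 w1‖} := by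

  intro wlo hwlo
  refine ⟨1/32, 1/8, wlo/100, 1/100, by norm_num, by norm_num, by positivity, by norm_num, ?_⟩
  intro T d n hT hn ζ σ hζ hζ1 hσ qs ws W Q ρ hW hQ hρ hwloW hWQ hρle Ω mΩ μ hprob M
    ε hε hεs cη hcη0 hcηs δ hδ w1 q1 hw1 hA η hη
  have hW0 : 0 < W := lt_of_lt_of_le hwlo hwloW
  have hQ0 : 0 < Q := hW0.trans hWQ
  have hnpos : (0:ℝ) < n := by exact_mod_cast hn
  have hn' : (n:ℝ) ≠ 0 := hnpos.ne'
  have hεW : ε ≤ W/100 := hεs.trans (by linarith)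
  have hP : |ip qs ws| ≤ W^2 := by
    have h1 : ip qs ws = ρ * (Q*W) := by rw [hρ]; field_simp
    rw [h1, abs_mul, abs_of_pos (mul_pos hQ0 hW0)]
    calc |ρ| * (Q*W) ≤ (W/Q) * (Q*W) :=
          mul_le_mul_of_nonneg_right hρle (mul_pos hQ0 hW0).le
      _ = W^2 := by field_simp
  -- measurability of the attention features
  have hXmeas : ∀ i : Fin n, Measurable fun ω => sampleX M i ω := by
    intro i
    apply measurable_pi_lambda
    intro t
    by_cases htR : t ∈ M.Rset i
    · simp only [sampleX, tokens, if_pos htR]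
      exact ((M.hy_meas i).smul_const ws).const_add qs
    · simp only [sampleX, tokens, if_neg htR]
      exact (measurable_const.sub (((M.hy_meas i).const_mul 0).smul_const ws)).add
        (M.hz_meas i t)
  have hmeas_a : ∀ i : Fin n, Measurable fun ω => attnFeature q1 (sampleX M i ω) :=
    fun i => (attnFeature_continuous q1).measurable.comp (hXmeas i)
  -- the events
  set Aev : Fin n → Set Ω :=
    fun i => {ω | ‖attnFeature q1 (sampleX M i ω) - (qs + M.yv i ω • ws)‖ ≤ ε} with hAev
  set Yev : Fin n → Set Ω := fun i => {ω | M.yv i ω = 1 ∨ M.yv i ω = -1} with hYev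
  set Hev : Set Ω := {ω | |∑ i, M.yv i ω| ≤ (n:ℝ)/4} with hHev
  have hAm : ∀ i, MeasurableSet (Aev i) := by
    intro i
    exact measurableSet_le (((hmeas_a i).sub
      (((M.hy_meas i).smul_const ws).const_add qs)).norm) measurable_const
  have hYm : ∀ i, MeasurableSet (Yev i) := by
    intro i
    have : Yev i = {ω | M.yv i ω = 1} ∪ {ω | M.yv i ω = -1} := by
      rw [hYev]; ext ω; simp [Set.mem_setOf_eq]
    rw [this]
    exact ((M.hy_meas i) (measurableSet_singleton 1)).union
      ((M.hy_meas i) (measurableSet_singleton (-1)))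
  have hHm : MeasurableSet Hev :=
    measurableSet_le ((Finset.measurable_sum _ fun i _ => M.hy_meas i).abs) measurable_const
  -- labels are ±1 a.s.
  have hYone : ∀ i, μ (Yev i) = 1 := by
    intro i
    have hdisj : Disjoint {ω | M.yv i ω = 1} {ω | M.yv i ω = -1} := by
      rw [Set.disjoint_left]
      intro ω h1 h2
      simp only [Set.mem_setOf_eq] at h1 h2
      rw [h1] at h2; norm_num at h2
    have hun : Yev i = {ω | M.yv i ω = 1} ∪ {ω | M.yv i ω = -1} := by
      rw [hYev]; ext ω; simp [Set.mem_setOf_eq]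
    rw [hun, measure_union hdisj ((M.hy_meas i) (measurableSet_singleton (-1))),
      M.hy_one i, M.hy_mone i]
    rw [(by norm_num : (1:ENNReal)/2 = 2⁻¹), ENNReal.inv_two_add_inv_two]
  have hYc : ∀ i, μ (Yev i)ᶜ = 0 := by
    intro i
    rw [prob_compl_eq_one_sub (hYm i), hYone i, tsub_self]
  have hyae : ∀ i, ∀ᵐ ω ∂μ, M.yv i ω = 1 ∨ M.yv i ω = -1 := by
    intro i
    rw [ae_iff]
    have : {ω | ¬(M.yv i ω = 1 ∨ M.yv i ω = -1)} = (Yev i)ᶜ := by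
      rw [hYev]; ext ω; simp [Set.mem_setOf_eq]
    rw [this]; exact hYc i
  -- measure of bad attention events
  have hAc : ∀ i, μ (Aev i)ᶜ ≤ ENNReal.ofReal δ := by
    intro i
    rw [prob_compl_eq_one_sub (hAm i)]
    have h1 : ENNReal.ofReal (1-δ) ≤ μ (Aev i) := hA i
    have h2 : (1:ENNReal) - μ (Aev i) ≤ 1 - ENNReal.ofReal (1-δ) := tsub_le_tsub_left h1 1
    refine h2.trans ?_
    rw [ENNReal.ofReal_sub 1 hδ, ENNReal.ofReal_one]
    exact tsub_tsub_le
  -- Hoeffding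
  have hind : iIndepFun M.yv μ := by
    have := M.indep.comp (fun _ => Prod.fst) (fun _ => measurable_fst)
    exact this
  have hHc : μ Hevᶜ ≤ ENNReal.ofReal (2 * Real.exp (-(n:ℝ)/32)) := by
    have hcompl : Hevᶜ = {ω | (n:ℝ)/4 < |∑ i, M.yv i ω|} := by
      rw [hHev]; ext ω; simp [Set.mem_setOf_eq, not_le]
    rw [hcompl]
    exact hoeff_pm_one M.yv M.hy_meas hind M.hy_one hyae
  -- the good event
  set G : Set Ω := ((⋂ i, Aev i) ∩ (⋂ i, Yev i)) ∩ Hev with hG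
  have hGm : MeasurableSet G :=
    (((MeasurableSet.iInter fun i => hAm i).inter
      (MeasurableSet.iInter fun i => hYm i)).inter hHm)
  have hGc : μ Gᶜ ≤ ENNReal.ofReal ((n:ℝ) * δ + 2 * Real.exp (-(n:ℝ)/32)) := by
    have hsub : Gᶜ ⊆ ((⋃ i, (Aev i)ᶜ) ∪ (⋃ i, (Yev i)ᶜ)) ∪ Hevᶜ := by
      rw [hG]
      simp only [Set.compl_inter, Set.compl_iInter]
      exact subset_rfl
    calc μ Gᶜ ≤ μ (((⋃ i, (Aev i)ᶜ) ∪ (⋃ i, (Yev i)ᶜ)) ∪ Hevᶜ) := measure_mono hsub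
      _ ≤ μ ((⋃ i, (Aev i)ᶜ) ∪ (⋃ i, (Yev i)ᶜ)) + μ Hevᶜ := measure_union_le _ _
      _ ≤ (μ (⋃ i, (Aev i)ᶜ) + μ (⋃ i, (Yev i)ᶜ)) + μ Hevᶜ := by
          gcongr
          exact measure_union_le _ _
      _ ≤ ((n:ENNReal) * ENNReal.ofReal δ + 0) + ENNReal.ofReal (2 * Real.exp (-(n:ℝ)/32)) := by
          gcongr
          · calc μ (⋃ i, (Aev i)ᶜ) ≤ ∑' i : Fin n, μ (Aev i)ᶜ := measure_iUnion_le _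
              _ ≤ ∑' _i : Fin n, ENNReal.ofReal δ := ENNReal.tsum_le_tsum fun i => hAc i
              _ = (n:ENNReal) * ENNReal.ofReal δ := by
                  rw [tsum_fintype]
                  simp [Finset.sum_const, Finset.card_fin]
          · calc μ (⋃ i, (Yev i)ᶜ) ≤ ∑' i : Fin n, μ (Yev i)ᶜ := measure_iUnion_le _
              _ = 0 := by simp [hYc]
      _ = ENNReal.ofReal ((n:ℝ) * δ + 2 * Real.exp (-(n:ℝ)/32)) := by
          rw [add_zero, ← ENNReal.ofReal_natCast n, ← ENNReal.ofReal_mul (by positivity),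
            ← ENNReal.ofReal_add (by positivity) (by positivity)]
  -- the good event implies the conclusion
  have hsubG : G ⊆ {ω | 1/8 * W ^ 2 / Q ≤
      ip ws (η • GwHatRaw (fun i => M.yv i ω) (fun i => sampleX M i ω) q1 w1) /
        ‖η • GwHatRaw (fun i => M.yv i ω) (fun i => sampleX M i ω) q1 w1‖} := by
    intro ω hω
    rw [hG] at hω
    obtain ⟨⟨hωA, hωY⟩, hωH⟩ := hω
    simp only [Set.mem_iInter] at hωA hωY
    have hy' : ∀ i, M.yv i ω = 1 ∨ M.yv i ω = -1 := fun i => hωY i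
    have ha' : ∀ i, ‖attnFeature q1 (sampleX M i ω) - (qs + M.yv i ω • ws)‖ ≤ ε :=
      fun i => hωA i
    have hS' : |∑ i, M.yv i ω| ≤ (n:ℝ)/4 := hωH
    have hgrw : GwHatRaw (fun i => M.yv i ω) (fun i => sampleX M i ω) q1 w1
        = (n:ℝ)⁻¹ • ∑ i, (M.yv i ω - ip (attnFeature q1 (sampleX M i ω)) w1) •
            attnFeature q1 (sampleX M i ω) := gwhatRaw_eq hn' _ _ _ _
    set v : E d := (n:ℝ)⁻¹ • ∑ i, (M.yv i ω - ip (attnFeature q1 (sampleX M i ω)) w1) •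
        attnFeature q1 (sampleX M i ω) with hv
    have hratio : ip ws (η • v) / ‖η • v‖ = ip ws v / ‖v‖ := by
      rw [ip, real_inner_smul_right, norm_smul, Real.norm_eq_abs, abs_of_pos hη,
        mul_div_mul_left _ _ hη.ne']
      rfl
    simp only [Set.mem_setOf_eq]
    rw [hgrw, hratio]
    exact det_core hn qs ws w1 hW hQ hW0 hWQ hP hε.le hεW hζ hζ1 hcη0 hcηs hw1
      (fun i => M.yv i ω) (fun i => attnFeature q1 (sampleX M i ω)) hy' ha' hS'
  -- conclude
  refine le_trans ?_ (measure_mono hsubG)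
  have hGge : (1:ENNReal) - μ Gᶜ ≤ μ G := by
    rw [prob_compl_eq_one_sub hGm]
    exact tsub_tsub_le
  refine le_trans ?_ hGge
  have harg : (1:ℝ) - (n:ℝ) * δ - 2 * Real.exp (-(1/32) * (n:ℕ))
      = 1 - ((n:ℝ) * δ + 2 * Real.exp (-(n:ℝ)/32)) := by
    have : (-(1/32) * ((n:ℕ):ℝ)) = -(n:ℝ)/32 := by ring
    rw [this]; ring
  rw [harg, ENNReal.ofReal_sub _ (by positivity), ENNReal.ofReal_one]
  exact tsub_le_tsub_left hGc 1
end
end
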